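/- Let Φ : ℝⁿ × ℝⁿ → ℝ be jointly convex and differentiable. Then for random variables X, X̄ with finite second moments and with all terms integrable: E[Φ(X, E[X])] − E[Φ(X̄, E[X̄])] ≥ E[⟨∂₁Φ(X̄, E[X̄]) + E[∂₂Φ(X̄, E[X̄])], X − X̄⟩]. -/

import Mathlib

open MeasureTheory InnerProductSpace

lemma grad_ineq_aux {E : Type*} [NormedAddCommGroup E] [InnerProductSpace ℝ E] [CompleteSpace E]
    (Φ : E × E → ℝ) (g₁ g₂ : E × E → E)
    (hconv : ConvexOn ℝ Set.univ Φ)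
    (hdiff₁ : ∀ p, HasGradientAt (fun x => Φ (x, p.2)) (g₁ p) p.1)
    (hdiff₂ : ∀ p, HasGradientAt (fun y => Φ (p.1, y)) (g₂ p) p.2)
    (a b x y : E) :
    Φ (x, y) + inner ℝ (g₁ (x, y)) (a - x) + inner ℝ (g₂ (x, y)) (b - y) ≤ Φ (a, b) := by
  set d₁ := a - x with hd₁
  set d₂ := b - y with hd₂
  set f : ℝ → ℝ := fun t => Φ (x + t • d₁, y) with hf
  set g : ℝ → ℝ := fun t => Φ (x, y + t • d₂) with hg
  have hcf : HasDerivAt (fun t : ℝ => x + t • d₁) d₁ 0 := by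
    simpa using ((hasDerivAt_id (0:ℝ)).smul_const d₁).const_add x
  have hcg : HasDerivAt (fun t : ℝ => y + t • d₂) d₂ 0 := by
    simpa using ((hasDerivAt_id (0:ℝ)).smul_const d₂).const_add y
  have hDf : HasDerivAt f (inner ℝ (g₁ (x, y)) d₁ : ℝ) 0 := by
    have hfd : HasFDerivAt (fun x' => Φ (x', y)) (toDual ℝ E (g₁ (x, y))) (x + (0:ℝ) • d₁) := by
      simpa using (hdiff₁ (x, y)).hasFDerivAt
    have := hfd.comp_hasDerivAt 0 hcf
    simpa [f, toDual_apply_apply, Function.comp_def] using this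
  have hDg : HasDerivAt g (inner ℝ (g₂ (x, y)) d₂ : ℝ) 0 := by
    have hfd : HasFDerivAt (fun y' => Φ (x, y')) (toDual ℝ E (g₂ (x, y))) (y + (0:ℝ) • d₂) := by
      simpa using (hdiff₂ (x, y)).hasFDerivAt
    have := hfd.comp_hasDerivAt 0 hcg
    simpa [g, toDual_apply_apply, Function.comp_def] using this
  set F : ℝ → ℝ := fun s => slope f 0 (-2 * s) + slope g 0 (-2 * s) with hF
  have hmap : Filter.Tendsto (fun s : ℝ => -2 * s) (nhdsWithin 0 (Set.Ioi 0))
      (nhdsWithin 0 {(0:ℝ)}ᶜ) := by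
    rw [tendsto_nhdsWithin_iff]
    refine ⟨?_, ?_⟩
    · have h0 : Filter.Tendsto (fun s : ℝ => -2 * s) (nhds 0) (nhds (-2 * 0)) :=
        (continuous_const.mul continuous_id).tendsto 0
      simpa using h0.mono_left nhdsWithin_le_nhds
    · filter_upwards [self_mem_nhdsWithin] with s hs
      simp only [Set.mem_compl_iff, Set.mem_singleton_iff]
      intro h
      rcases mul_eq_zero.mp h with h' | h'
      · norm_num at h'
      · exact absurd h' (ne_of_gt hs)
  have hTf := (hasDerivAt_iff_tendsto_slope.mp hDf).comp hmap
  have hTg := (hasDerivAt_iff_tendsto_slope.mp hDg).comp hmap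
  have hTF : Filter.Tendsto F (nhdsWithin 0 (Set.Ioi 0))
      (nhds ((inner ℝ (g₁ (x, y)) d₁ : ℝ) + inner ℝ (g₂ (x, y)) d₂)) := by
    simpa [hF, Function.comp] using hTf.add hTg
  have hbound : ∀ s ∈ Set.Ioc (0:ℝ) 1, F s ≤ Φ (a, b) - Φ (x, y) := by
    intro s hs
    obtain ⟨hs0, hs1⟩ := hs
    have hA : Φ (x + s • d₁, y + s • d₂) ≤ s * Φ (a, b) + (1 - s) * Φ (x, y) := by
      have hpoint : ((x + s • d₁, y + s • d₂) : E × E)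
          = s • ((a, b) : E × E) + (1 - s) • ((x, y) : E × E) := by
        apply Prod.ext <;> simp [hd₁, hd₂] <;> module
      rw [hpoint]
      simpa [smul_eq_mul] using hconv.2 (Set.mem_univ ((a, b) : E × E))
        (Set.mem_univ ((x, y) : E × E)) (le_of_lt hs0) (by linarith : (0:ℝ) ≤ 1 - s)
        (by ring)
    have hB : Φ (x, y) ≤ (1/2 : ℝ) * Φ (x + s • d₁, y + s • d₂)
        + (1/2 : ℝ) * Φ (x - s • d₁, y - s • d₂) := by
      have hpoint : ((x, y) : E × E)
          = (1/2 : ℝ) • ((x + s • d₁, y + s • d₂) : E × E)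
            + (1/2 : ℝ) • ((x - s • d₁, y - s • d₂) : E × E) := by
        apply Prod.ext <;> simp <;> module
      nth_rewrite 1 [hpoint]
      simpa [smul_eq_mul] using hconv.2
        (Set.mem_univ ((x + s • d₁, y + s • d₂) : E × E))
        (Set.mem_univ ((x - s • d₁, y - s • d₂) : E × E))
        (by norm_num : (0:ℝ) ≤ 1/2) (by norm_num : (0:ℝ) ≤ 1/2) (by norm_num)
    have hC : Φ (x - s • d₁, y - s • d₂) ≤ (1/2 : ℝ) * f (-2 * s) + (1/2 : ℝ) * g (-2 * s) := by
      have hpoint : ((x - s • d₁, y - s • d₂) : E × E)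
          = (1/2 : ℝ) • ((x + (-2 * s) • d₁, y) : E × E)
            + (1/2 : ℝ) • ((x, y + (-2 * s) • d₂) : E × E) := by
        apply Prod.ext <;> simp <;> module
      rw [hpoint]
      simpa [hf, hg, smul_eq_mul] using hconv.2
        (Set.mem_univ ((x + (-2 * s) • d₁, y) : E × E))
        (Set.mem_univ ((x, y + (-2 * s) • d₂) : E × E))
        (by norm_num : (0:ℝ) ≤ 1/2) (by norm_num : (0:ℝ) ≤ 1/2) (by norm_num)
    have hf0 : f 0 = Φ (x, y) := by simp [hf]
    have hg0 : g 0 = Φ (x, y) := by simp [hg]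
    have hs2 : (-2 : ℝ) * s < 0 := by linarith
    have hFs : F s = (f (-2 * s) + g (-2 * s) - 2 * Φ (x, y)) / (-2 * s) := by
      simp only [hF, slope_def_field, hf0, hg0]
      field_simp
      ring
    rw [hFs, div_le_iff_of_neg hs2]
    nlinarith [hA, hB, hC]
  have hineq : (inner ℝ (g₁ (x, y)) d₁ : ℝ) + inner ℝ (g₂ (x, y)) d₂ ≤ Φ (a, b) - Φ (x, y) := by
    refine le_of_tendsto hTF ?_
    have hIoc : Set.Ioc (0:ℝ) 1 ∈ nhdsWithin (0:ℝ) (Set.Ioi 0) :=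
      Ioc_mem_nhdsGT_of_mem ⟨le_refl (0:ℝ), zero_lt_one⟩
    filter_upwards [hIoc] with s hs
    exact hbound s hs
  linarith
/-- Convexity inequality for mean-field terminal costs: if `Φ : ℝⁿ × ℝⁿ → ℝ` is
jointly convex and differentiable, then for square-integrable random variables
`X, X̄` (with all terms integrable),
`E[Φ(X, E[X])] − E[Φ(X̄, E[X̄])] ≥ E[⟪∂₁Φ(X̄, E[X̄]) + E[∂₂Φ(X̄, E[X̄])], X − X̄⟫]`. -/
theorem stmt10 {n : ℕ} {Ω : Type*} [MeasurableSpace Ω] (P : Measure Ω)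
    [IsProbabilityMeasure P]
    (Φ : EuclideanSpace ℝ (Fin n) × EuclideanSpace ℝ (Fin n) → ℝ)
    (g₁ g₂ : EuclideanSpace ℝ (Fin n) × EuclideanSpace ℝ (Fin n) →
      EuclideanSpace ℝ (Fin n))
    (hconv : ConvexOn ℝ Set.univ Φ)
    (hdiff₁ : ∀ p, HasGradientAt (fun x => Φ (x, p.2)) (g₁ p) p.1)
    (hdiff₂ : ∀ p, HasGradientAt (fun y => Φ (p.1, y)) (g₂ p) p.2)
    (X Xbar : Ω → EuclideanSpace ℝ (Fin n))
    (hX : MemLp X 2 P) (hXbar : MemLp Xbar 2 P)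
    (hint1 : Integrable (fun ω => Φ (X ω, ∫ ω', X ω' ∂P)) P)
    (hint2 : Integrable (fun ω => Φ (Xbar ω, ∫ ω', Xbar ω' ∂P)) P)
    (hint3 : Integrable (fun ω => g₁ (Xbar ω, ∫ ω', Xbar ω' ∂P)) P)
    (hint4 : Integrable (fun ω => g₂ (Xbar ω, ∫ ω', Xbar ω' ∂P)) P)
    (hint5 : Integrable (fun ω =>
      (inner ℝ (g₁ (Xbar ω, ∫ ω', Xbar ω' ∂P)
          + ∫ ω'', g₂ (Xbar ω'', ∫ ω', Xbar ω' ∂P) ∂P) (X ω - Xbar ω) : ℝ)) P) :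
    (∫ ω, (inner ℝ (g₁ (Xbar ω, ∫ ω', Xbar ω' ∂P)
          + ∫ ω'', g₂ (Xbar ω'', ∫ ω', Xbar ω' ∂P) ∂P) (X ω - Xbar ω) : ℝ) ∂P)
      ≤ (∫ ω, Φ (X ω, ∫ ω', X ω' ∂P) ∂P) - ∫ ω, Φ (Xbar ω, ∫ ω', Xbar ω' ∂P) ∂P := by
  set mX : EuclideanSpace ℝ (Fin n) := ∫ ω', X ω' ∂P with hmX
  set mXb : EuclideanSpace ℝ (Fin n) := ∫ ω', Xbar ω' ∂P with hmXb
  set c2 : EuclideanSpace ℝ (Fin n) := ∫ ω'', g₂ (Xbar ω'', mXb) ∂P with hc2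
  have hXi : Integrable X P := hX.integrable one_le_two
  have hXbi : Integrable Xbar P := hXbar.integrable one_le_two
  have hd : Integrable (fun ω => X ω - Xbar ω) P := hXi.sub hXbi
  have hI1 : Integrable (fun ω => (inner ℝ c2 (X ω - Xbar ω) : ℝ)) P := hd.const_inner c2
  have hIg1 : Integrable (fun ω => (inner ℝ (g₁ (Xbar ω, mXb)) (X ω - Xbar ω) : ℝ)) P := by
    have : (fun ω => (inner ℝ (g₁ (Xbar ω, mXb)) (X ω - Xbar ω) : ℝ))
        = fun ω => (inner ℝ (g₁ (Xbar ω, mXb) + c2) (X ω - Xbar ω) : ℝ)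
          - (inner ℝ c2 (X ω - Xbar ω) : ℝ) := by
      funext ω; rw [inner_add_left]; ring
    rw [this]
    exact hint5.sub hI1
  have hIg2 : Integrable (fun ω => (inner ℝ (g₂ (Xbar ω, mXb)) (mX - mXb) : ℝ)) P :=
    hint4.inner_const (mX - mXb)
  -- pointwise inequality
  have hpt : ∀ ω, Φ (Xbar ω, mXb) + (inner ℝ (g₁ (Xbar ω, mXb)) (X ω - Xbar ω) : ℝ)
      + (inner ℝ (g₂ (Xbar ω, mXb)) (mX - mXb) : ℝ) ≤ Φ (X ω, mX) := fun ω =>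
    grad_ineq_aux Φ g₁ g₂ hconv hdiff₁ hdiff₂ (X ω) mX (Xbar ω) mXb
  have hmono : ∫ ω, (Φ (Xbar ω, mXb) + (inner ℝ (g₁ (Xbar ω, mXb)) (X ω - Xbar ω) : ℝ)
      + (inner ℝ (g₂ (Xbar ω, mXb)) (mX - mXb) : ℝ)) ∂P ≤ ∫ ω, Φ (X ω, mX) ∂P :=
    integral_mono ((hint2.add hIg1).add hIg2) hint1 hpt
  have e1 := integral_add (hint2.add hIg1) hIg2
  have e2 := integral_add hint2 hIg1
  simp only [Pi.add_apply] at e1 e2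
  rw [e1, e2] at hmono
  -- identify the second inner-integral
  have he1 : ∫ ω, (inner ℝ (g₂ (Xbar ω, mXb)) (mX - mXb) : ℝ) ∂P
      = (inner ℝ c2 (mX - mXb) : ℝ) := by
    have : ∀ ω, (inner ℝ (g₂ (Xbar ω, mXb)) (mX - mXb) : ℝ)
        = (inner ℝ (mX - mXb) (g₂ (Xbar ω, mXb)) : ℝ) := fun ω => real_inner_comm _ _
    simp_rw [this]
    rw [integral_inner hint4]
    exact real_inner_comm _ _
  have he2 : (inner ℝ c2 (mX - mXb) : ℝ) = ∫ ω, (inner ℝ c2 (X ω - Xbar ω) : ℝ) ∂P := by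
    rw [integral_inner hd c2]
    congr 1
    rw [integral_sub hXi hXbi]
  have he3 : (∫ ω, (inner ℝ (g₁ (Xbar ω, mXb) + c2) (X ω - Xbar ω) : ℝ) ∂P)
      = (∫ ω, (inner ℝ (g₁ (Xbar ω, mXb)) (X ω - Xbar ω) : ℝ) ∂P)
        + ∫ ω, (inner ℝ c2 (X ω - Xbar ω) : ℝ) ∂P := by
    rw [← integral_add hIg1 hI1]
    congr 1
    funext ω
    rw [inner_add_left]
  rw [he3]
  linarith [hmono, he1, he2]
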